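/- Let $\lambda=(\lambda_1,\ldots,\lambda_\ell)$ be a partition. The branching component graph $\mathcal{BC}(\lambda)$ (whose strata are indexed by the $\alpha_1$-height, ranging over integers from $\lambda_1$ down to $-\lambda_1$) has exactly $2\lambda_1+1$ strata, and the multiset of partitions labeling stratum $j$ equals the multiset labeling stratum $-j$ for all $0\le j\le\lambda_1$. -/

import Mathlib

/-- A `±` diagram of outer shape `lam`: a chain of partitions `μ ⊆ ν ⊆ lam` such that
`ν/μ` and `lam/ν` are horizontal strips (`+`'s are placed in `ν/μ`, `−`'s in `lam/ν`).
The inner shape `μ` labels the corresponding vertex of the branching component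
graph. -/
structure PMDiagram (lam : YoungDiagram) where
  mu : YoungDiagram
  nu : YoungDiagram
  mu_le_nu : mu.cells ⊆ nu.cells
  nu_le_lam : nu.cells ⊆ lam.cells
  strip_plus : ∀ j, nu.colLen j ≤ mu.colLen j + 1
  strip_minus : ∀ j, lam.colLen j ≤ nu.colLen j + 1

/-- The stratum (`α₁`-height) of a vertex of the branching component graph:
number of `+`'s minus number of `−`'s of the corresponding `±` diagram. -/
def PMDiagram.stratum {lam : YoungDiagram} (D : PMDiagram lam) : ℤ :=
  ((D.nu.card : ℤ) - (D.mu.card : ℤ)) - ((lam.card : ℤ) - (D.nu.card : ℤ))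

namespace BCAux

open Finset YoungDiagram

lemma colLen_mono {μ ν : YoungDiagram} (h : μ.cells ⊆ ν.cells) (j : ℕ) :
    μ.colLen j ≤ ν.colLen j := by
  by_contra hlt
  push_neg at hlt
  have h1 : ((ν.colLen j, j) : ℕ × ℕ) ∈ μ.cells := by
    rw [YoungDiagram.mem_cells]; exact YoungDiagram.mem_iff_lt_colLen.2 hlt
  have h2 : ((ν.colLen j, j) : ℕ × ℕ) ∈ ν := by
    rw [← YoungDiagram.mem_cells]; exact h h1
  exact absurd (YoungDiagram.mem_iff_lt_colLen.1 h2) (lt_irrefl _)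

lemma lt_R_of_colLen_pos {lam : YoungDiagram} {j : ℕ} (h : 0 < lam.colLen j) :
    j < lam.rowLen 0 := by
  have : ((0, j) : ℕ × ℕ) ∈ lam := YoungDiagram.mem_iff_lt_colLen.2 h
  exact YoungDiagram.mem_iff_lt_rowLen.1 this

lemma card_eq_sum_colLen {lam ν : YoungDiagram} (h : ν.cells ⊆ lam.cells) :
    ν.card = ∑ j ∈ Finset.range (lam.rowLen 0), ν.colLen j := by
  have hmem : ∀ x ∈ ν.cells, x.2 ∈ Finset.range (lam.rowLen 0) := by
    intro x hx
    have hxl : x ∈ lam := by rw [← YoungDiagram.mem_cells]; exact h hx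
    have h0 : ((0, x.2) : ℕ × ℕ) ∈ lam :=
      lam.up_left_mem (Nat.zero_le _) le_rfl hxl
    rw [Finset.mem_range, ← YoungDiagram.mem_iff_lt_rowLen]
    exact h0
  rw [show ν.card = ν.cells.card from rfl, Finset.card_eq_sum_card_fiberwise hmem]
  refine Finset.sum_congr rfl fun j _ => ?_
  rw [ν.colLen_eq_card]
  rfl

/-- A Young diagram from an antitone column-length profile dominated by `lam`. -/
def mkDiagram (lam : YoungDiagram) (N : ℕ → ℕ) (hle : ∀ j, N j ≤ lam.colLen j)
    (hanti : ∀ j, N (j + 1) ≤ N j) : YoungDiagram where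
  cells := lam.cells.filter (fun c => c.1 < N c.2)
  isLowerSet := by
    intro x y hxy hx
    simp only [Finset.coe_filter, Set.mem_setOf_eq, Finset.mem_coe] at hx ⊢
    obtain ⟨hx1, hx2⟩ := hx
    have hy1 : y.1 ≤ x.1 := hxy.1
    have hy2 : y.2 ≤ x.2 := hxy.2
    constructor
    · rw [YoungDiagram.mem_cells] at hx1 ⊢
      exact lam.up_left_mem hy1 hy2 hx1
    · have hN : N x.2 ≤ N y.2 := antitone_nat_of_succ_le hanti hy2
      omega

lemma mem_mkDiagram {lam : YoungDiagram} {N : ℕ → ℕ} {hle} {hanti} {i j : ℕ} :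
    (i, j) ∈ mkDiagram lam N hle hanti ↔ i < N j := by
  constructor
  · intro h
    simp only [← YoungDiagram.mem_cells, mkDiagram, Finset.mem_filter] at h
    exact h.2
  · intro h
    simp only [← YoungDiagram.mem_cells, mkDiagram, Finset.mem_filter]
    refine ⟨?_, h⟩
    rw [YoungDiagram.mem_cells, YoungDiagram.mem_iff_lt_colLen]
    exact lt_of_lt_of_le h (hle j)

lemma colLen_mkDiagram {lam : YoungDiagram} {N : ℕ → ℕ} {hle} {hanti} (j : ℕ) :
    (mkDiagram lam N hle hanti).colLen j = N j := by
  have key : ∀ i, i < (mkDiagram lam N hle hanti).colLen j ↔ i < N j := by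
    intro i
    rw [← YoungDiagram.mem_iff_lt_colLen, mem_mkDiagram]
  have h1 := key ((mkDiagram lam N hle hanti).colLen j)
  have h2 := key (N j)
  omega

lemma cells_mkDiagram_subset {lam : YoungDiagram} {N : ℕ → ℕ} {hle} {hanti} :
    (mkDiagram lam N hle hanti).cells ⊆ lam.cells :=
  Finset.filter_subset _ _

/-- The run of free columns with inner length `m`. -/
def Fm (lam mu : YoungDiagram) (m : ℕ) : Finset ℕ :=
  (Finset.range (lam.rowLen 0)).filter (fun i => mu.colLen i = m ∧ lam.colLen i = m + 1)

lemma mem_Fm_iff {lam mu : YoungDiagram} {m i : ℕ} :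
    i ∈ Fm lam mu m ↔ i < lam.rowLen 0 ∧ mu.colLen i = m ∧ lam.colLen i = m + 1 := by
  simp [Fm]

lemma mem_Fm_of_between {lam mu : YoungDiagram} {m i k l : ℕ}
    (hk : k ∈ Fm lam mu m) (hl : l ∈ Fm lam mu m) (h1 : k ≤ i) (h2 : i ≤ l) :
    i ∈ Fm lam mu m := by
  rw [mem_Fm_iff] at *
  have h3 := mu.colLen_anti k i h1
  have h4 := mu.colLen_anti i l h2
  have h5 := lam.colLen_anti k i h1
  have h6 := lam.colLen_anti i l h2
  omega

lemma free_mem_Fm {lam mu : YoungDiagram} {j : ℕ}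
    (hfree : lam.colLen j = mu.colLen j + 1) : j ∈ Fm lam mu (mu.colLen j) := by
  rw [mem_Fm_iff]
  exact ⟨lt_R_of_colLen_pos (by omega), rfl, hfree⟩

/-- Reversal within the run of free columns containing `j`. -/
def sig (lam mu : YoungDiagram) (j : ℕ) : ℕ :=
  if h : (Fm lam mu (mu.colLen j)).Nonempty
  then (Fm lam mu (mu.colLen j)).min' h + (Fm lam mu (mu.colLen j)).max' h - j
  else j

lemma sig_spec {lam mu : YoungDiagram} {j : ℕ}
    (hfree : lam.colLen j = mu.colLen j + 1) :
    sig lam mu j ∈ Fm lam mu (mu.colLen j) ∧ sig lam mu (sig lam mu j) = j := by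
  have hj : j ∈ Fm lam mu (mu.colLen j) := free_mem_Fm hfree
  have hne : (Fm lam mu (mu.colLen j)).Nonempty := ⟨j, hj⟩
  set F := Fm lam mu (mu.colLen j) with hF
  have ha : F.min' hne ≤ j := Finset.min'_le _ _ hj
  have hb : j ≤ F.max' hne := Finset.le_max' _ _ hj
  have hs : sig lam mu j = F.min' hne + F.max' hne - j := by
    rw [sig]; rw [dif_pos hne]
  have hmem : sig lam mu j ∈ F := by
    rw [hs]
    exact mem_Fm_of_between (Finset.min'_mem _ hne) (Finset.max'_mem _ hne)
      (by omega) (by omega)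
  refine ⟨hmem, ?_⟩
  have hMeq : mu.colLen (sig lam mu j) = mu.colLen j := (mem_Fm_iff.1 hmem).2.1
  have hs2 : sig lam mu (sig lam mu j)
      = F.min' hne + F.max' hne - sig lam mu j := by
    rw [sig, hMeq, ← hF, dif_pos hne]
  have hha : F.min' hne ≤ sig lam mu j := Finset.min'_le _ _ hmem
  have hhb : sig lam mu j ≤ F.max' hne := Finset.le_max' _ _ hmem
  omega

/-- The new column-length profile: reverse-and-complement within each run of
free columns; identity elsewhere. -/
def Nstar (lam mu nu : YoungDiagram) (j : ℕ) : ℕ :=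
  if lam.colLen j = mu.colLen j + 1
  then 2 * mu.colLen j + 1 - nu.colLen (sig lam mu j)
  else nu.colLen j

section Valid

variable {lam mu nu : YoungDiagram}
  (hmn : mu.cells ⊆ nu.cells) (hnl : nu.cells ⊆ lam.cells)
  (hsp : ∀ j, nu.colLen j ≤ mu.colLen j + 1)
  (hsm : ∀ j, lam.colLen j ≤ nu.colLen j + 1)

include hmn hnl hsp hsm

lemma Nstar_bounds (j : ℕ) :
    mu.colLen j ≤ Nstar lam mu nu j ∧ Nstar lam mu nu j ≤ mu.colLen j + 1 ∧
    Nstar lam mu nu j ≤ lam.colLen j ∧ lam.colLen j ≤ Nstar lam mu nu j + 1 := by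
  by_cases hfree : lam.colLen j = mu.colLen j + 1
  · obtain ⟨hmem, -⟩ := sig_spec (mu := mu) hfree
    rw [mem_Fm_iff] at hmem
    have h1 := colLen_mono hmn (sig lam mu j)
    have h2 := hsp (sig lam mu j)
    have hN : Nstar lam mu nu j = 2 * mu.colLen j + 1 - nu.colLen (sig lam mu j) := by
      rw [Nstar, if_pos hfree]
    omega
  · have hN : Nstar lam mu nu j = nu.colLen j := by rw [Nstar, if_neg hfree]
    have h1 := colLen_mono hmn j
    have h2 := hsp j
    have h3 := colLen_mono hnl j
    have h4 := hsm j
    omega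

lemma Nstar_antitone : ∀ j, Nstar lam mu nu (j + 1) ≤ Nstar lam mu nu j := by
  intro j
  have hM := mu.colLen_anti j (j + 1) (by omega)
  have hL := lam.colLen_anti j (j + 1) (by omega)
  have hB1 := Nstar_bounds hmn hnl hsp hsm j
  have hB2 := Nstar_bounds hmn hnl hsp hsm (j + 1)
  by_cases h1 : lam.colLen j = mu.colLen j + 1
  · by_cases h2 : lam.colLen (j + 1) = mu.colLen (j + 1) + 1
    · by_cases hMeq : mu.colLen (j + 1) = mu.colLen j
      · have hj : j ∈ Fm lam mu (mu.colLen j) := free_mem_Fm h1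
        have hj1 : j + 1 ∈ Fm lam mu (mu.colLen j) := by
          rw [mem_Fm_iff]
          exact ⟨lt_R_of_colLen_pos (by omega), hMeq, by omega⟩
        have hne : (Fm lam mu (mu.colLen j)).Nonempty := ⟨j, hj⟩
        set F := Fm lam mu (mu.colLen j) with hF
        have hs1 : sig lam mu j = F.min' hne + F.max' hne - j := by
          rw [sig]; rw [dif_pos hne]
        have hs2 : sig lam mu (j + 1) = F.min' hne + F.max' hne - (j + 1) := by
          rw [sig, hMeq, ← hF, dif_pos hne]
        have ha : F.min' hne ≤ j := Finset.min'_le _ _ hj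
        have hb : j + 1 ≤ F.max' hne := Finset.le_max' _ _ hj1
        have hanti : nu.colLen (sig lam mu j) ≤ nu.colLen (sig lam mu (j + 1)) :=
          nu.colLen_anti _ _ (by omega)
        have hN1 : Nstar lam mu nu j
            = 2 * mu.colLen j + 1 - nu.colLen (sig lam mu j) := by
          rw [Nstar, if_pos h1]
        have hN2 : Nstar lam mu nu (j + 1)
            = 2 * mu.colLen (j + 1) + 1 - nu.colLen (sig lam mu (j + 1)) := by
          rw [Nstar, if_pos h2]
        obtain ⟨hmem1, -⟩ := sig_spec (mu := mu) h1
        obtain ⟨hmem2, -⟩ := sig_spec (mu := mu) h2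
        rw [mem_Fm_iff] at hmem1 hmem2
        have hb1 := hsp (sig lam mu j)
        have hb1' := colLen_mono hmn (sig lam mu j)
        have hb2 := hsp (sig lam mu (j + 1))
        have hb2' := colLen_mono hmn (sig lam mu (j + 1))
        omega
      · omega
    · omega
  · by_cases h2 : lam.colLen (j + 1) = mu.colLen (j + 1) + 1
    · have hN1 : Nstar lam mu nu j = nu.colLen j := by rw [Nstar, if_neg h1]
      have h3 := colLen_mono hmn j
      have h4 := hsp j
      have h5 := colLen_mono hnl j
      have h6 := hsm j
      omega
    · have hN1 : Nstar lam mu nu j = nu.colLen j := by rw [Nstar, if_neg h1]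
      have hN2 : Nstar lam mu nu (j + 1) = nu.colLen (j + 1) := by rw [Nstar, if_neg h2]
      have := nu.colLen_anti j (j + 1) (by omega)
      omega

lemma Nstar_le_colLen (j : ℕ) : Nstar lam mu nu j ≤ lam.colLen j :=
  (Nstar_bounds hmn hnl hsp hsm j).2.2.1

/-- The nu of the involuted diagram. -/
noncomputable def nuStar : YoungDiagram :=
  mkDiagram lam (Nstar lam mu nu) (Nstar_le_colLen hmn hnl hsp hsm)
    (Nstar_antitone hmn hnl hsp hsm)

lemma colLen_nuStar (j : ℕ) :
    (nuStar hmn hnl hsp hsm).colLen j = Nstar lam mu nu j :=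
  colLen_mkDiagram j

lemma sum_nuStar_add :
    (∑ j ∈ Finset.range (lam.rowLen 0), Nstar lam mu nu j)
      + ∑ j ∈ Finset.range (lam.rowLen 0), nu.colLen j
    = (∑ j ∈ Finset.range (lam.rowLen 0), mu.colLen j)
      + ∑ j ∈ Finset.range (lam.rowLen 0), lam.colLen j := by
  classical
  have key : ∑ j ∈ Finset.range (lam.rowLen 0), (Nstar lam mu nu j + nu.colLen j)
      = ∑ j ∈ Finset.range (lam.rowLen 0), (mu.colLen j + lam.colLen j) := by
    rw [← Finset.sum_filter_add_sum_filter_not (Finset.range (lam.rowLen 0))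
      (fun j => lam.colLen j = mu.colLen j + 1)
      (fun j => Nstar lam mu nu j + nu.colLen j),
      ← Finset.sum_filter_add_sum_filter_not (Finset.range (lam.rowLen 0))
      (fun j => lam.colLen j = mu.colLen j + 1)
      (fun j => mu.colLen j + lam.colLen j)]
    congr 1
    · -- free columns
      set F := (Finset.range (lam.rowLen 0)).filter
        (fun j => lam.colLen j = mu.colLen j + 1) with hFdef
      have hsig : ∀ j ∈ F, sig lam mu j ∈ F := by
        intro j hj
        rw [hFdef, Finset.mem_filter, Finset.mem_range] at hj ⊢
        obtain ⟨hmem, -⟩ := sig_spec (mu := mu) hj.2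
        rw [mem_Fm_iff] at hmem
        exact ⟨hmem.1, by omega⟩
      have hinv : ∀ j ∈ F, sig lam mu (sig lam mu j) = j := by
        intro j hj
        rw [hFdef, Finset.mem_filter] at hj
        exact (sig_spec (mu := mu) hj.2).2
      have hre : ∑ j ∈ F, nu.colLen j = ∑ j ∈ F, nu.colLen (sig lam mu j) :=
        Finset.sum_nbij' (fun j => sig lam mu j) (fun j => sig lam mu j)
          hsig hsig hinv hinv (fun j hj => by rw [hinv j hj])
      rw [Finset.sum_add_distrib, hre, ← Finset.sum_add_distrib]
      refine Finset.sum_congr rfl fun j hj => ?_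
      rw [hFdef, Finset.mem_filter] at hj
      have hfree := hj.2
      obtain ⟨hmem, -⟩ := sig_spec (mu := mu) hfree
      rw [mem_Fm_iff] at hmem
      have h1 := colLen_mono hmn (sig lam mu j)
      have h2 := hsp (sig lam mu j)
      have hN : Nstar lam mu nu j
          = 2 * mu.colLen j + 1 - nu.colLen (sig lam mu j) := by
        rw [Nstar, if_pos hfree]
      omega
    · refine Finset.sum_congr rfl fun j hj => ?_
      rw [Finset.mem_filter] at hj
      have hfree := hj.2
      have hN : Nstar lam mu nu j = nu.colLen j := by rw [Nstar, if_neg hfree]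
      have h1 := colLen_mono hmn j
      have h2 := hsp j
      have h3 := colLen_mono hnl j
      have h4 := hsm j
      omega
  rw [← Finset.sum_add_distrib, ← Finset.sum_add_distrib, key]

end Valid

/-- The stratum-negating involution of `±` diagrams of shape `lam`. -/
noncomputable def phi {lam : YoungDiagram} (D : PMDiagram lam) : PMDiagram lam where
  mu := D.mu
  nu := nuStar D.mu_le_nu D.nu_le_lam D.strip_plus D.strip_minus
  mu_le_nu := by
    intro c hc
    obtain ⟨a, b⟩ := c
    have h2 : a < D.mu.colLen b := by
      rw [← YoungDiagram.mem_iff_lt_colLen, ← YoungDiagram.mem_cells]; exact hc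
    have h3 : a < (nuStar D.mu_le_nu D.nu_le_lam D.strip_plus D.strip_minus).colLen b :=
      lt_of_lt_of_le h2 (by
        rw [colLen_nuStar]
        exact (Nstar_bounds D.mu_le_nu D.nu_le_lam D.strip_plus D.strip_minus b).1)
    rw [← YoungDiagram.mem_iff_lt_colLen, ← YoungDiagram.mem_cells] at h3
    exact h3
  nu_le_lam := cells_mkDiagram_subset
  strip_plus := by
    intro j
    rw [colLen_nuStar]
    exact (Nstar_bounds D.mu_le_nu D.nu_le_lam D.strip_plus D.strip_minus j).2.1.trans
      (by omega)
  strip_minus := by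
    intro j
    rw [colLen_nuStar]
    exact (Nstar_bounds D.mu_le_nu D.nu_le_lam D.strip_plus D.strip_minus j).2.2.2

lemma phi_mu {lam : YoungDiagram} (D : PMDiagram lam) : (phi D).mu = D.mu := rfl

lemma phi_card_add {lam : YoungDiagram} (D : PMDiagram lam) :
    (phi D).nu.card + D.nu.card = D.mu.card + lam.card := by
  have h1 : (phi D).nu.card
      = ∑ j ∈ Finset.range (lam.rowLen 0), (phi D).nu.colLen j :=
    card_eq_sum_colLen (phi D).nu_le_lam
  have h2 : D.nu.card = ∑ j ∈ Finset.range (lam.rowLen 0), D.nu.colLen j :=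
    card_eq_sum_colLen D.nu_le_lam
  have h3 : D.mu.card = ∑ j ∈ Finset.range (lam.rowLen 0), D.mu.colLen j :=
    card_eq_sum_colLen (fun c hc => D.nu_le_lam (D.mu_le_nu hc))
  have h4 : lam.card = ∑ j ∈ Finset.range (lam.rowLen 0), lam.colLen j :=
    card_eq_sum_colLen (le_refl _)
  have h5 : ∀ j, (phi D).nu.colLen j = Nstar lam D.mu D.nu j := fun j =>
    colLen_nuStar D.mu_le_nu D.nu_le_lam D.strip_plus D.strip_minus j
  rw [h1, h2, h3, h4]
  rw [Finset.sum_congr rfl (fun j _ => h5 j)]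
  exact sum_nuStar_add D.mu_le_nu D.nu_le_lam D.strip_plus D.strip_minus

lemma phi_stratum {lam : YoungDiagram} (D : PMDiagram lam) :
    (phi D).stratum = -D.stratum := by
  have h := phi_card_add D
  have hmu : (phi D).mu = D.mu := rfl
  unfold PMDiagram.stratum
  rw [hmu]
  omega

lemma pm_ext {lam : YoungDiagram} {D1 D2 : PMDiagram lam}
    (h1 : D1.mu = D2.mu) (h2 : D1.nu = D2.nu) : D1 = D2 := by
  cases D1; cases D2
  simp only at h1 h2
  subst h1; subst h2
  rfl

lemma phi_involutive {lam : YoungDiagram} : Function.Involutive (phi (lam := lam)) := by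
  intro D
  refine pm_ext rfl ?_
  -- colLen of (phi (phi D)).nu equals colLen of D.nu
  have hcol : ∀ j, (phi (phi D)).nu.colLen j = D.nu.colLen j := by
    intro j
    have hA : ∀ k, (phi D).nu.colLen k = Nstar lam D.mu D.nu k := fun k =>
      colLen_nuStar D.mu_le_nu D.nu_le_lam D.strip_plus D.strip_minus k
    have hB : (phi (phi D)).nu.colLen j = Nstar lam D.mu (phi D).nu j :=
      colLen_nuStar (phi D).mu_le_nu (phi D).nu_le_lam (phi D).strip_plus
        (phi D).strip_minus j
    rw [hB]
    by_cases hfree : lam.colLen j = D.mu.colLen j + 1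
    · have hs := sig_spec (mu := D.mu) hfree
      obtain ⟨hmem, hinv⟩ := hs
      rw [mem_Fm_iff] at hmem
      have hfree' : lam.colLen (sig lam D.mu j) = D.mu.colLen (sig lam D.mu j) + 1 := by
        omega
      have e1 : Nstar lam D.mu (phi D).nu j
          = 2 * D.mu.colLen j + 1 - (phi D).nu.colLen (sig lam D.mu j) := by
        rw [Nstar, if_pos hfree]
      have e2 : (phi D).nu.colLen (sig lam D.mu j)
          = Nstar lam D.mu D.nu (sig lam D.mu j) := hA _
      have e3 : Nstar lam D.mu D.nu (sig lam D.mu j)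
          = 2 * D.mu.colLen (sig lam D.mu j) + 1
            - D.nu.colLen (sig lam D.mu (sig lam D.mu j)) := by
        rw [Nstar, if_pos hfree']
      rw [hinv] at e3
      have hb1 := colLen_mono D.mu_le_nu j
      have hb2 := D.strip_plus j
      omega
    · have e1 : Nstar lam D.mu (phi D).nu j = (phi D).nu.colLen j := by
        rw [Nstar, if_neg hfree]
      rw [e1, hA, Nstar, if_neg hfree]
  -- conclude cells equality
  ext ⟨i, j⟩
  simp only [YoungDiagram.mem_cells] at *
  rw [YoungDiagram.mem_iff_lt_colLen, YoungDiagram.mem_iff_lt_colLen, hcol]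

/-- The inner diagram obtained from `lam` by removing the bottom cell of each of
the last `n` nonempty columns. -/
def inner (lam : YoungDiagram) (n : ℕ) : YoungDiagram where
  cells := lam.cells.filter
    (fun c => c.1 + 1 < lam.colLen c.2 ∨ c.2 < lam.rowLen 0 - n)
  isLowerSet := by
    intro x y hxy hx
    simp only [Finset.coe_filter, Set.mem_setOf_eq, Finset.mem_coe] at hx ⊢
    obtain ⟨hx1, hx2⟩ := hx
    have hy1 : y.1 ≤ x.1 := hxy.1
    have hy2 : y.2 ≤ x.2 := hxy.2
    have hy1' : y ∈ lam.cells := by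
      rw [YoungDiagram.mem_cells] at hx1 ⊢
      exact lam.up_left_mem hy1 hy2 hx1
    refine ⟨hy1', ?_⟩
    by_cases hc : y.2 < lam.rowLen 0 - n
    · right; exact hc
    · left
      have hcL := lam.colLen_anti y.2 x.2 hy2
      rcases hx2 with h | h
      · omega
      · omega

lemma mem_inner_iff {lam : YoungDiagram} {n i j : ℕ} :
    (i, j) ∈ inner lam n ↔
      i < lam.colLen j ∧ (i + 1 < lam.colLen j ∨ j < lam.rowLen 0 - n) := by
  show (i, j) ∈ (inner lam n).cells ↔ _
  simp only [inner, Finset.mem_filter]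
  rw [YoungDiagram.mem_cells, YoungDiagram.mem_iff_lt_colLen]

lemma colLen_inner {lam : YoungDiagram} {n : ℕ} (j : ℕ) :
    (inner lam n).colLen j =
      if lam.rowLen 0 - n ≤ j then lam.colLen j - 1 else lam.colLen j := by
  have key : ∀ i, i < (inner lam n).colLen j ↔
      (i < lam.colLen j ∧ (i + 1 < lam.colLen j ∨ j < lam.rowLen 0 - n)) := by
    intro i
    rw [← YoungDiagram.mem_iff_lt_colLen, mem_inner_iff]
  by_cases hc : lam.rowLen 0 - n ≤ j
  · rw [if_pos hc]
    have h1 := key ((inner lam n).colLen j)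
    have h2 := key (lam.colLen j - 1)
    omega
  · rw [if_neg hc]
    have h1 := key ((inner lam n).colLen j)
    have h2 := key (lam.colLen j)
    omega

lemma inner_subset {lam : YoungDiagram} {n : ℕ} :
    (inner lam n).cells ⊆ lam.cells :=
  Finset.filter_subset _ _

lemma inner_strip {lam : YoungDiagram} {n : ℕ} (j : ℕ) :
    lam.colLen j ≤ (inner lam n).colLen j + 1 := by
  rw [colLen_inner]
  split <;> omega

lemma card_inner {lam : YoungDiagram} {n : ℕ} (hn : n ≤ lam.rowLen 0) :
    (inner lam n).card + n = lam.card := by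
  have h1 : (inner lam n).card
      = ∑ j ∈ Finset.range (lam.rowLen 0), (inner lam n).colLen j :=
    card_eq_sum_colLen inner_subset
  have h2 : lam.card = ∑ j ∈ Finset.range (lam.rowLen 0), lam.colLen j :=
    card_eq_sum_colLen (le_refl _)
  have h3 : ∑ j ∈ Finset.range (lam.rowLen 0),
      ((inner lam n).colLen j + (if lam.rowLen 0 - n ≤ j then 1 else 0))
      = ∑ j ∈ Finset.range (lam.rowLen 0), lam.colLen j := by
    refine Finset.sum_congr rfl fun j hj => ?_
    rw [Finset.mem_range] at hj
    have hpos : 0 < lam.colLen j := by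
      by_contra h
      push_neg at h
      have : ¬ ((0, j) : ℕ × ℕ) ∈ lam := by
        rw [YoungDiagram.mem_iff_lt_colLen]; omega
      rw [YoungDiagram.mem_iff_lt_rowLen] at this
      omega
    rw [colLen_inner]
    split <;> omega
  have h4 : ∑ j ∈ Finset.range (lam.rowLen 0),
      (if lam.rowLen 0 - n ≤ j then 1 else 0) = n := by
    classical
    have heq : (Finset.range (lam.rowLen 0)).filter (fun j => lam.rowLen 0 - n ≤ j)
        = Finset.Ico (lam.rowLen 0 - n) (lam.rowLen 0) := by
      ext x
      simp only [Finset.mem_filter, Finset.mem_range, Finset.mem_Ico]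
      omega
    rw [← Finset.sum_filter, heq, Finset.sum_const, smul_eq_mul, mul_one, Nat.card_Ico]
    omega
  rw [Finset.sum_add_distrib] at h3
  omega

/-- The `±` diagram realizing stratum `n ≥ 0`: `ν = λ`, `μ = inner lam n`. -/
def topDiagram (lam : YoungDiagram) (n : ℕ) : PMDiagram lam where
  mu := inner lam n
  nu := lam
  mu_le_nu := inner_subset
  nu_le_lam := le_refl _
  strip_plus := inner_strip
  strip_minus := fun j => by omega

/-- The `±` diagram realizing stratum `-n`: `ν = μ = inner lam n`. -/
def botDiagram (lam : YoungDiagram) (n : ℕ) : PMDiagram lam where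
  mu := inner lam n
  nu := inner lam n
  mu_le_nu := le_refl _
  nu_le_lam := inner_subset
  strip_plus := fun j => by omega
  strip_minus := inner_strip

lemma stratum_topDiagram {lam : YoungDiagram} {n : ℕ} (hn : n ≤ lam.rowLen 0) :
    (topDiagram lam n).stratum = (n : ℤ) := by
  have h := card_inner (lam := lam) hn
  unfold PMDiagram.stratum topDiagram
  simp only
  omega

lemma stratum_botDiagram {lam : YoungDiagram} {n : ℕ} (hn : n ≤ lam.rowLen 0) :
    (botDiagram lam n).stratum = -(n : ℤ) := by
  have h := card_inner (lam := lam) hn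
  unfold PMDiagram.stratum botDiagram
  simp only
  omega

lemma stratum_bounds {lam : YoungDiagram} (D : PMDiagram lam) :
    -(lam.rowLen 0 : ℤ) ≤ D.stratum ∧ D.stratum ≤ (lam.rowLen 0 : ℤ) := by
  have h1 : D.nu.card = ∑ j ∈ Finset.range (lam.rowLen 0), D.nu.colLen j :=
    card_eq_sum_colLen D.nu_le_lam
  have h2 : D.mu.card = ∑ j ∈ Finset.range (lam.rowLen 0), D.mu.colLen j :=
    card_eq_sum_colLen (fun c hc => D.nu_le_lam (D.mu_le_nu hc))
  have h3 : lam.card = ∑ j ∈ Finset.range (lam.rowLen 0), lam.colLen j :=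
    card_eq_sum_colLen (le_refl _)
  have hb1 : D.nu.card ≤ D.mu.card + lam.rowLen 0 := by
    rw [h1, h2]
    calc ∑ j ∈ Finset.range (lam.rowLen 0), D.nu.colLen j
        ≤ ∑ j ∈ Finset.range (lam.rowLen 0), (D.mu.colLen j + 1) :=
          Finset.sum_le_sum (fun j _ => D.strip_plus j)
      _ = (∑ j ∈ Finset.range (lam.rowLen 0), D.mu.colLen j) + lam.rowLen 0 := by
          rw [Finset.sum_add_distrib, Finset.sum_const, Finset.card_range, smul_eq_mul,
            mul_one]
  have hb2 : lam.card ≤ D.nu.card + lam.rowLen 0 := by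
    rw [h1, h3]
    calc ∑ j ∈ Finset.range (lam.rowLen 0), lam.colLen j
        ≤ ∑ j ∈ Finset.range (lam.rowLen 0), (D.nu.colLen j + 1) :=
          Finset.sum_le_sum (fun j _ => D.strip_minus j)
      _ = (∑ j ∈ Finset.range (lam.rowLen 0), D.nu.colLen j) + lam.rowLen 0 := by
          rw [Finset.sum_add_distrib, Finset.sum_const, Finset.card_range, smul_eq_mul,
            mul_one]
  have hb3 : D.mu.card ≤ D.nu.card := Finset.card_le_card D.mu_le_nu
  have hb4 : D.nu.card ≤ lam.card := Finset.card_le_card D.nu_le_lam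
  unfold PMDiagram.stratum
  omega

end BCAux

open BCAux in
/-- For a partition `λ`, the branching component graph `𝓑𝓒(λ)`
(vertices = `±` diagrams of outer shape `λ`, strata = `α₁`-heights) has exactly
`2λ₁ + 1` strata — the set of strata is the interval `[-λ₁, λ₁]` — and for every
`0 ≤ j ≤ λ₁` the multiset of partitions labeling stratum `j` equals the multiset
labeling stratum `-j`. -/
theorem branching_component_strata_symmetry (lam : YoungDiagram) :
    ({z : ℤ | ∃ D : PMDiagram lam, D.stratum = z} =
      Set.Icc (-(lam.rowLen 0 : ℤ)) (lam.rowLen 0 : ℤ)) ∧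
    (∀ j : ℤ, 0 ≤ j → j ≤ (lam.rowLen 0 : ℤ) → ∀ mu : YoungDiagram,
      {D : PMDiagram lam | D.stratum = j ∧ D.mu = mu}.ncard =
      {D : PMDiagram lam | D.stratum = -j ∧ D.mu = mu}.ncard) := by
  constructor
  · ext z
    simp only [Set.mem_setOf_eq, Set.mem_Icc]
    constructor
    · rintro ⟨D, rfl⟩
      exact ⟨(stratum_bounds D).1, (stratum_bounds D).2⟩
    · rintro ⟨hz1, hz2⟩
      rcases le_or_gt 0 z with hz | hz
      · refine ⟨topDiagram lam z.toNat, ?_⟩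
        rw [stratum_topDiagram (by omega)]
        omega
      · refine ⟨botDiagram lam (-z).toNat, ?_⟩
        rw [stratum_botDiagram (by omega)]
        omega
  · intro j hj0 hjR mu
    have himg : phi '' {D : PMDiagram lam | D.stratum = j ∧ D.mu = mu}
        = {D : PMDiagram lam | D.stratum = -j ∧ D.mu = mu} := by
      ext E
      simp only [Set.mem_image, Set.mem_setOf_eq]
      constructor
      · rintro ⟨D, ⟨hD1, hD2⟩, rfl⟩
        exact ⟨by rw [phi_stratum, hD1], by rw [phi_mu, hD2]⟩
      · rintro ⟨hE1, hE2⟩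
        refine ⟨phi E, ⟨?_, ?_⟩, phi_involutive E⟩
        · rw [phi_stratum, hE1]; ring
        · rw [phi_mu, hE2]
    rw [← himg]
    exact (Set.ncard_image_of_injective _ phi_involutive.injective).symm
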